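/- Cleaning Lemma (dimension-counting form) for subsystem codes: Let P = F_2^{2n} be the symplectic vector space of n-qubit Pauli operators, let G ≤ P be the gauge group (as a subspace) and S = G ∩ G^⊥ the stabilizer. Define 2k = 2n − dim G − dim S. For a partition of the qubits into M and its complement M^c, define g_bare(M) = dim(G^⊥ ∩ P_M) − dim(S ∩ P_M) and g(M^c) = dim(S^⊥ ∩ P_{M^c}) − dim(G ∩ P_{M^c}). Then g_bare(M) + g(M^c) = 2k. -/

import Mathlib

open Module

lemma orthogonal_sup' {K V : Type*} [Field K] [AddCommGroup V] [Module K V]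
    (B : LinearMap.BilinForm K V) (A C : Submodule K V) :
    B.orthogonal (A ⊔ C) = B.orthogonal A ⊓ B.orthogonal C := by
  apply le_antisymm
  · exact le_inf (B.orthogonal_le le_sup_left) (B.orthogonal_le le_sup_right)
  · rintro x ⟨hxA, hxC⟩ y hy
    obtain ⟨a, ha, c, hc, rfl⟩ := Submodule.mem_sup.mp hy
    have ha' := hxA a ha
    have hc' := hxC c hc
    change B a x = 0 at ha'; change B c x = 0 at hc'; change B (a + c) x = 0
    rw [map_add, LinearMap.add_apply, ha', hc', add_zero]

/-- Cleaning Lemma (dimension-counting form) for subsystem codes: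
`g_bare(M) + g(M^c) = 2k`, where `g_bare(M) = dim(G^⊥ ⊓ P_M) − dim(S ⊓ P_M)`,
`g(M^c) = dim(S^⊥ ⊓ P_{M^c}) − dim(G ⊓ P_{M^c})`, `S = G ⊓ G^⊥`, and
`2k = 2n − dim G − dim S`.  (Stated additively, using
`S ⊓ P_M ≤ G^⊥ ⊓ P_M` and `G ⊓ P_{M^c} ≤ S^⊥ ⊓ P_{M^c}`.) -/
theorem stmt4 (P : Type*) [AddCommGroup P] [Module (ZMod 2) P]
    [FiniteDimensional (ZMod 2) P]
    (n m mc : ℕ) (hn : n = m + mc) (hP : finrank (ZMod 2) P = 2 * n)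
    (Φ : LinearMap.BilinForm (ZMod 2) P) (hnd : Φ.Nondegenerate) (halt : Φ.IsAlt)
    (PM PMc : Submodule (ZMod 2) P) (hMMc : IsCompl PM PMc)
    (hperpM : Φ.orthogonal PM = PMc) (hperpMc : Φ.orthogonal PMc = PM)
    (hdimM : finrank (ZMod 2) PM = 2 * m) (hdimMc : finrank (ZMod 2) PMc = 2 * mc)
    (G : Submodule (ZMod 2) P) (S : Submodule (ZMod 2) P) (hS : S = G ⊓ Φ.orthogonal G)
    (k : ℕ) (hk : 2 * k + finrank (ZMod 2) G + finrank (ZMod 2) S = 2 * n) :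
    (finrank (ZMod 2) (Φ.orthogonal G ⊓ PM : Submodule (ZMod 2) P)
        - finrank (ZMod 2) (S ⊓ PM : Submodule (ZMod 2) P))
      + (finrank (ZMod 2) (Φ.orthogonal S ⊓ PMc : Submodule (ZMod 2) P)
        - finrank (ZMod 2) (G ⊓ PMc : Submodule (ZMod 2) P)) = 2 * k := by
  have hrefl : Φ.IsRefl := halt.isRefl
  -- G^⊥ ⊓ PM = (G ⊔ PMc)^⊥
  have h1 : Φ.orthogonal G ⊓ PM = Φ.orthogonal (G ⊔ PMc) := by
    rw [orthogonal_sup', hperpMc]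
  have h2 : Φ.orthogonal S ⊓ PMc = Φ.orthogonal (S ⊔ PM) := by
    rw [orthogonal_sup', hperpM]
  have dorth : ∀ W : Submodule (ZMod 2) P,
      finrank (ZMod 2) (Φ.orthogonal W) = 2 * n - finrank (ZMod 2) W := by
    intro W; rw [Φ.finrank_orthogonal hnd, hP]
  have hle : ∀ W : Submodule (ZMod 2) P, finrank (ZMod 2) W ≤ 2 * n := by
    intro W; rw [← hP]; exact Submodule.finrank_le W
  -- dimension equation for G ⊔ PMc
  have e1 : finrank (ZMod 2) (G ⊔ PMc : Submodule (ZMod 2) P)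
      + finrank (ZMod 2) (G ⊓ PMc : Submodule (ZMod 2) P)
      = finrank (ZMod 2) G + 2 * mc := by
    rw [Submodule.finrank_sup_add_finrank_inf_eq, hdimMc]
  have e2 : finrank (ZMod 2) (S ⊔ PM : Submodule (ZMod 2) P)
      + finrank (ZMod 2) (S ⊓ PM : Submodule (ZMod 2) P)
      = finrank (ZMod 2) S + 2 * m := by
    rw [Submodule.finrank_sup_add_finrank_inf_eq, hdimM]
  have hSG : S ≤ Φ.orthogonal G := by rw [hS]; exact inf_le_right
  have hGS : G ≤ Φ.orthogonal S :=
    le_trans (Φ.le_orthogonal_orthogonal hrefl) (Φ.orthogonal_le hSG)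
  have ineq1 : finrank (ZMod 2) (S ⊓ PM : Submodule (ZMod 2) P)
      ≤ finrank (ZMod 2) (Φ.orthogonal G ⊓ PM : Submodule (ZMod 2) P) :=
    Submodule.finrank_mono (inf_le_inf_right PM hSG)
  have ineq2 : finrank (ZMod 2) (G ⊓ PMc : Submodule (ZMod 2) P)
      ≤ finrank (ZMod 2) (Φ.orthogonal S ⊓ PMc : Submodule (ZMod 2) P) :=
    Submodule.finrank_mono (inf_le_inf_right PMc hGS)
  rw [h1, h2, dorth, dorth] at *
  have l1 := hle (G ⊔ PMc)
  have l2 := hle (S ⊔ PM)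
  omega
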